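/- Fix 1 ≤ α ≤ n and tuples s ≤ r of positive reals with r_α < 1. Let s*, r* be the tuples obtained from s, r by replacing the α-th entries by s_α/p and r_α/p. Then there is a unique continuous ℚ_p-algebra homomorphism φ_α : Π_{[s,r]} → Π_{[s*,r*]} with φ_α(T_α) = (1+T_α)^p − 1 and φ_α(T_β) = T_β for β ≠ α, and φ_α is isometric: ‖φ_α(F)‖_{[s*,r*]} = ‖F‖_{[s,r]} for all F ∈ Π_{[s,r]}. -/

import Mathlib

open scoped BigOperators

/-- The weight `p^{-(t₁m₁+⋯+tₙmₙ)/(p-1)}` of the monomial `T^m` for the Gauss norm. -/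
noncomputable def gaussWeight (p : ℕ) {n : ℕ} (t : Fin n → ℝ) (m : Fin n → ℤ) : ℝ :=
  (p : ℝ) ^ (-(∑ α, t α * (m α : ℝ)) / ((p : ℝ) - 1))

/-- The Gauss norm `‖Σ aₘ Tᵐ‖_t` on the Laurent polynomial ring
`ℚ_p[T₁^{±1},…,Tₙ^{±1}]`, realized as the monoid algebra of `ℤⁿ` over `ℚ_p`. -/
noncomputable def gaussNorm (p : ℕ) [Fact p.Prime] {n : ℕ} (t : Fin n → ℝ)
    (f : AddMonoidAlgebra ℚ_[p] (Fin n → ℤ)) : ℝ :=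
  ⨆ m : Fin n → ℤ, ‖f.coeff m‖ * gaussWeight p t m

/-- The corner tuple of the box `∏ [sα, rα]` indexed by `c : Fin n → Bool`. -/
def corner {n : ℕ} (s r : Fin n → ℝ) (c : Fin n → Bool) : Fin n → ℝ :=
  fun α => if c α then r α else s α

/-- The interval norm `‖f‖_{[s,r]}`: the maximum of the Gauss norms over the `2ⁿ` corners. -/
noncomputable def intervalGaussNorm (p : ℕ) [Fact p.Prime] {n : ℕ} (s r : Fin n → ℝ)
    (f : AddMonoidAlgebra ℚ_[p] (Fin n → ℤ)) : ℝ :=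
  ⨆ c : Fin n → Bool, gaussNorm p (corner s r c) f

/-- The variable `T_α` of the Laurent polynomial ring. -/
noncomputable def Tvar (p : ℕ) [Fact p.Prime] {n : ℕ} (α : Fin n) :
    AddMonoidAlgebra ℚ_[p] (Fin n → ℤ) :=
  AddMonoidAlgebra.single (Pi.single α (1 : ℤ)) 1

/-- A completion `Π_{[s,r]}` of the Laurent polynomial ring with respect to a norm `N`. -/
structure GaussCompletion (p : ℕ) [Fact p.Prime] (n : ℕ)
    (N : AddMonoidAlgebra ℚ_[p] (Fin n → ℤ) → ℝ) where
  carrier : Type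
  [normedRing : NormedCommRing carrier]
  [normedAlgebra : NormedAlgebra ℚ_[p] carrier]
  [complete : CompleteSpace carrier]
  emb : AddMonoidAlgebra ℚ_[p] (Fin n → ℤ) →ₐ[ℚ_[p]] carrier
  isometric : ∀ f, ‖emb f‖ = N f
  denseRange : DenseRange (fun f => emb f)

attribute [instance] GaussCompletion.normedRing GaussCompletion.normedAlgebra
  GaussCompletion.complete

set_option linter.unusedSectionVars false
set_option linter.unusedVariables false

section Aux
variable (p : ℕ) [hp : Fact p.Prime] {n : ℕ}

lemma p_pos : (0:ℝ) < p := by exact_mod_cast hp.out.pos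
lemma p_one_lt : (1:ℝ) < p := by exact_mod_cast hp.out.one_lt

lemma gaussWeight_pos (t : Fin n → ℝ) (m : Fin n → ℤ) : 0 < gaussWeight p t m :=
  Real.rpow_pos_of_pos (p_pos p) _

lemma gaussWeight_zero (t : Fin n → ℝ) : gaussWeight p t 0 = 1 := by
  simp [gaussWeight]

variable {p}

lemma gauss_bdd (t : Fin n → ℝ) (f : AddMonoidAlgebra ℚ_[p] (Fin n → ℤ)) :
    BddAbove (Set.range fun m => ‖f.coeff m‖ * gaussWeight p t m) := by
  apply Set.Finite.bddAbove
  apply Set.Finite.subset (Set.Finite.insert 0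
    ((f.coeff.support.finite_toSet).image fun m => ‖f.coeff m‖ * gaussWeight p t m))
  rintro x ⟨m, rfl⟩
  by_cases h : m ∈ f.coeff.support
  · exact Set.mem_insert_of_mem _ ⟨m, h, rfl⟩
  · left
    show ‖f.coeff m‖ * _ = 0
    rw [Finsupp.notMem_support_iff.mp h]
    simp

lemma gaussNorm_nonneg (t : Fin n → ℝ) (f : AddMonoidAlgebra ℚ_[p] (Fin n → ℤ)) :
    0 ≤ gaussNorm p t f :=
  Real.iSup_nonneg fun m => mul_nonneg (norm_nonneg _) (gaussWeight_pos p t m).le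

lemma le_gaussNorm (t : Fin n → ℝ) (f : AddMonoidAlgebra ℚ_[p] (Fin n → ℤ)) (m : Fin n → ℤ) :
    ‖f.coeff m‖ * gaussWeight p t m ≤ gaussNorm p t f :=
  le_ciSup (gauss_bdd t f) m

lemma gaussNorm_le (t : Fin n → ℝ) (f : AddMonoidAlgebra ℚ_[p] (Fin n → ℤ)) {B : ℝ}
    (h : ∀ m, ‖f.coeff m‖ * gaussWeight p t m ≤ B) : gaussNorm p t f ≤ B :=
  ciSup_le h

lemma gaussNorm_single (t : Fin n → ℝ) (m : Fin n → ℤ) (a : ℚ_[p]) :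
    gaussNorm p t (AddMonoidAlgebra.single m a) = ‖a‖ * gaussWeight p t m := by
  refine le_antisymm (gaussNorm_le t _ fun m' => ?_) ?_
  · classical
    rcases eq_or_ne m m' with rfl | h
    · rw [AddMonoidAlgebra.coeff_single, Finsupp.single_eq_same]
    · rw [AddMonoidAlgebra.coeff_single, Finsupp.single_eq_of_ne' h]
      simp only [norm_zero, zero_mul]
      exact mul_nonneg (norm_nonneg _) (gaussWeight_pos p t m).le
  · have := le_gaussNorm t (AddMonoidAlgebra.single m a) m
    rwa [AddMonoidAlgebra.coeff_single, Finsupp.single_eq_same] at this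

lemma gaussNorm_add_le_max (t : Fin n → ℝ) (f g : AddMonoidAlgebra ℚ_[p] (Fin n → ℤ)) :
    gaussNorm p t (f + g) ≤ max (gaussNorm p t f) (gaussNorm p t g) := by
  apply gaussNorm_le
  intro m
  have h1 : ‖(f + g).coeff m‖ ≤ max ‖f.coeff m‖ ‖g.coeff m‖ := by
    rw [AddMonoidAlgebra.coeff_add, Finsupp.add_apply]
    exact Padic.nonarchimedean _ _
  calc ‖(f + g).coeff m‖ * gaussWeight p t m ≤ max ‖f.coeff m‖ ‖g.coeff m‖ * gaussWeight p t m :=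
        mul_le_mul_of_nonneg_right h1 (gaussWeight_pos p t m).le
    _ = max (‖f.coeff m‖ * gaussWeight p t m) (‖g.coeff m‖ * gaussWeight p t m) :=
        (max_mul_of_nonneg _ _ (gaussWeight_pos p t m).le)
    _ ≤ max (gaussNorm p t f) (gaussNorm p t g) :=
        max_le_max (le_gaussNorm t f m) (le_gaussNorm t g m)

-- interval norm lemmas
lemma iN_nonneg (s r : Fin n → ℝ) (f : AddMonoidAlgebra ℚ_[p] (Fin n → ℤ)) :
    0 ≤ intervalGaussNorm p s r f :=
  Real.iSup_nonneg fun c => gaussNorm_nonneg _ f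

lemma gauss_le_iN (s r : Fin n → ℝ) (f : AddMonoidAlgebra ℚ_[p] (Fin n → ℤ)) (c : Fin n → Bool) :
    gaussNorm p (corner s r c) f ≤ intervalGaussNorm p s r f :=
  le_ciSup (Set.Finite.bddAbove (Set.finite_range fun c => gaussNorm p (corner s r c) f)) c

lemma iN_le (s r : Fin n → ℝ) (f : AddMonoidAlgebra ℚ_[p] (Fin n → ℤ)) {B : ℝ}
    (h : ∀ c, gaussNorm p (corner s r c) f ≤ B) : intervalGaussNorm p s r f ≤ B :=
  ciSup_le h

lemma iN_add_le_max (s r : Fin n → ℝ) (f g : AddMonoidAlgebra ℚ_[p] (Fin n → ℤ)) :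
    intervalGaussNorm p s r (f + g) ≤
      max (intervalGaussNorm p s r f) (intervalGaussNorm p s r g) :=
  iN_le s r _ fun c => (gaussNorm_add_le_max _ f g).trans
    (max_le_max (gauss_le_iN s r f c) (gauss_le_iN s r g c))

lemma iN_eq_zero {s r : Fin n → ℝ} {f : AddMonoidAlgebra ℚ_[p] (Fin n → ℤ)}
    (h : intervalGaussNorm p s r f = 0) : f = 0 := by
  by_contra hf
  obtain ⟨m, hm⟩ := Finsupp.ne_iff.mp (mt AddMonoidAlgebra.coeff_inj.mp hf)
  simp only [AddMonoidAlgebra.coeff_zero, Finsupp.coe_zero, Pi.zero_apply] at hm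
  have h1 : 0 < ‖f.coeff m‖ * gaussWeight p (corner s r fun _ => false) m :=
    mul_pos (norm_pos_iff.mpr hm) (gaussWeight_pos p _ m)
  have h2 := (le_gaussNorm (corner s r fun _ => false) f m).trans
    (gauss_le_iN s r f (fun _ => false))
  rw [h] at h2
  exact absurd (h1.trans_le h2) (lt_irrefl 0)

lemma iN_one (s r : Fin n → ℝ) : intervalGaussNorm p s r (1 : AddMonoidAlgebra ℚ_[p] (Fin n → ℤ)) = 1 := by
  have : ∀ c : Fin n → Bool, gaussNorm p (corner s r c) (1 : AddMonoidAlgebra ℚ_[p] (Fin n → ℤ)) = 1 := by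
    intro c
    rw [AddMonoidAlgebra.one_def, gaussNorm_single, gaussWeight_zero]
    simp
  simp only [intervalGaussNorm, this, ciSup_const]

end Aux

section Sigma
variable (p : ℕ) [hp : Fact p.Prime] {n : ℕ} (α : Fin n)

/-- The exponent substitution `m ↦ (m₁,…, p·m_α, …, m_n)`. -/
def sigmaSub (m : Fin n → ℤ) : Fin n → ℤ := Function.update m α ((p : ℤ) * m α)

variable {p}

lemma sigmaSub_apply (m : Fin n → ℤ) (β : Fin n) :
    sigmaSub p α m β = if β = α then (p : ℤ) * m α else m β := by
  simp [sigmaSub, Function.update_apply]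

lemma sigmaSub_add (m m' : Fin n → ℤ) :
    sigmaSub p α (m + m') = sigmaSub p α m + sigmaSub p α m' := by
  funext β
  simp only [Pi.add_apply, sigmaSub_apply]
  by_cases h : β = α <;> simp [h, mul_add]

lemma sigmaSub_zero : sigmaSub p α (0 : Fin n → ℤ) = 0 := by
  funext β
  rw [sigmaSub_apply]
  simp

lemma sigmaSub_inj : Function.Injective (sigmaSub p α) := by
  intro m m' h
  funext β
  have hβ := congrFun h β
  rcases eq_or_ne β α with rfl | hne
  · rw [sigmaSub_apply, sigmaSub_apply, if_pos rfl, if_pos rfl] at hβ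
    have hp0 : (p : ℤ) ≠ 0 := by exact_mod_cast hp.out.ne_zero
    exact mul_left_cancel₀ hp0 hβ
  · rwa [sigmaSub_apply, sigmaSub_apply, if_neg hne, if_neg hne] at hβ

lemma corner_update (s r : Fin n → ℝ) (c : Fin n → Bool) :
    corner (Function.update s α (s α / p)) (Function.update r α (r α / p)) c =
      Function.update (corner s r c) α (corner s r c α / p) := by
  funext β
  rcases eq_or_ne β α with rfl | hne
  · simp only [corner, Function.update_self]
    split <;> rfl
  · simp [corner, Function.update_of_ne hne]

lemma gaussWeight_sigmaSub (t : Fin n → ℝ) (m : Fin n → ℤ) :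
    gaussWeight p (Function.update t α (t α / p)) (sigmaSub p α m) = gaussWeight p t m := by
  unfold gaussWeight
  congr 2
  rw [neg_inj]
  apply Finset.sum_congr rfl
  intro β _
  rcases eq_or_ne β α with rfl | hne
  · rw [Function.update_self, sigmaSub_apply, if_pos rfl]
    have hp0 : (p : ℝ) ≠ 0 := by exact_mod_cast hp.out.ne_zero
    push_cast
    field_simp
  · rw [Function.update_of_ne hne, sigmaSub_apply, if_neg hne]

lemma gaussNorm_mapDomain (t : Fin n → ℝ) (f : AddMonoidAlgebra ℚ_[p] (Fin n → ℤ)) :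
    gaussNorm p (Function.update t α (t α / p)) (AddMonoidAlgebra.mapDomain (sigmaSub p α) f) =
      gaussNorm p t f := by
  set t' := Function.update t α (t α / p)
  set g : AddMonoidAlgebra ℚ_[p] (Fin n → ℤ) := AddMonoidAlgebra.mapDomain (sigmaSub p α) f with hg
  apply le_antisymm
  · apply gaussNorm_le
    intro m'
    by_cases h : m' ∈ Set.range (sigmaSub p α)
    · obtain ⟨m, rfl⟩ := h
      rw [hg, AddMonoidAlgebra.mapDomain, AddMonoidAlgebra.coeff_ofCoeff, Finsupp.mapDomain_apply (sigmaSub_inj α) f.coeff m, gaussWeight_sigmaSub]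
      exact le_gaussNorm t f m
    · rw [hg, AddMonoidAlgebra.mapDomain, AddMonoidAlgebra.coeff_ofCoeff, Finsupp.mapDomain_of_notMem_range f.coeff m' h]
      simpa using gaussNorm_nonneg t f
  · apply gaussNorm_le
    intro m
    have : ‖f.coeff m‖ * gaussWeight p t m = ‖g.coeff (sigmaSub p α m)‖ * gaussWeight p t' (sigmaSub p α m) := by
      rw [hg, AddMonoidAlgebra.mapDomain, AddMonoidAlgebra.coeff_ofCoeff, Finsupp.mapDomain_apply (sigmaSub_inj α) f.coeff m, gaussWeight_sigmaSub]
    rw [this]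
    exact le_gaussNorm t' g _

lemma iN_mapDomain (s r : Fin n → ℝ) (f : AddMonoidAlgebra ℚ_[p] (Fin n → ℤ)) :
    intervalGaussNorm p (Function.update s α (s α / p)) (Function.update r α (r α / p))
      (AddMonoidAlgebra.mapDomain (sigmaSub p α) f) = intervalGaussNorm p s r f := by
  unfold intervalGaussNorm
  congr 1
  funext c
  rw [corner_update, gaussNorm_mapDomain]

end Sigma

section Carrier
variable {p : ℕ} [hp : Fact p.Prime] {n : ℕ} {s r : Fin n → ℝ}
  (C : GaussCompletion p n (intervalGaussNorm p s r))

lemma carrier_norm_one : ‖(1 : C.carrier)‖ = 1 := by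
  rw [show (1 : C.carrier) = C.emb 1 from (map_one C.emb).symm, C.isometric, iN_one]

lemma carrier_nonarch (x y : C.carrier) : ‖x + y‖ ≤ max ‖x‖ ‖y‖ := by
  have key : ∀ q : C.carrier × C.carrier, ‖q.1 + q.2‖ ≤ max ‖q.1‖ ‖q.2‖ := by
    intro q
    refine DenseRange.induction_on (C.denseRange.prodMap C.denseRange) q ?_ ?_
    · apply isClosed_le
      · exact (continuous_fst.add continuous_snd).norm
      · exact ((continuous_fst.norm).max (continuous_snd.norm))
    · rintro ⟨f, g⟩
      show ‖C.emb f + C.emb g‖ ≤ max ‖C.emb f‖ ‖C.emb g‖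
      rw [← map_add, C.isometric, C.isometric, C.isometric]
      exact iN_add_le_max s r f g
  exact key (x, y)

lemma carrier_nonarch_sum {X : Type*} (t : Finset X) (g : X → C.carrier) {B : ℝ}
    (hB : 0 ≤ B) (h : ∀ i ∈ t, ‖g i‖ ≤ B) : ‖∑ i ∈ t, g i‖ ≤ B := by
  classical
  induction t using Finset.cons_induction_on with
  | empty => simpa using hB
  | cons a t' hx ih =>
    rw [Finset.sum_cons]
    refine (carrier_nonarch C _ _).trans (max_le (h a (Finset.mem_cons_self a t')) ?_)
    exact ih fun i hi => h i (Finset.mem_cons_of_mem hi)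

lemma carrier_norm_le_one_of_sub {y : C.carrier} {δ : ℝ} (hδ1 : δ ≤ 1) (h : ‖y - 1‖ ≤ δ) :
    ‖y‖ ≤ 1 := by
  have : y = (y - 1) + 1 := by ring
  rw [this]
  exact (carrier_nonarch C _ _).trans (max_le (h.trans hδ1) (le_of_eq (carrier_norm_one C)))

lemma carrier_pow_sub_one {y : C.carrier} {δ : ℝ} (hδ1 : δ ≤ 1) (h : ‖y - 1‖ ≤ δ) (k : ℕ) :
    ‖y ^ k - 1‖ ≤ δ := by
  have hδ0 : 0 ≤ δ := (norm_nonneg _).trans h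
  induction k with
  | zero => simpa using hδ0
  | succ k ih =>
    have hy : ‖y‖ ≤ 1 := carrier_norm_le_one_of_sub C hδ1 h
    have : y ^ (k+1) - 1 = (y ^ k - 1) * y + (y - 1) := by ring
    rw [this]
    refine (carrier_nonarch C _ _).trans (max_le ?_ h)
    calc ‖(y ^ k - 1) * y‖ ≤ ‖y ^ k - 1‖ * ‖y‖ := norm_mul_le _ _
      _ ≤ δ * 1 := mul_le_mul ih hy (norm_nonneg _) hδ0
      _ = δ := mul_one δ

lemma carrier_eq_norm_add_of_lt {x e : C.carrier} (h : ‖e‖ < ‖x‖) : ‖x + e‖ = ‖x‖ := by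
  apply le_antisymm
  · exact (carrier_nonarch C x e).trans (max_le le_rfl h.le)
  · by_contra hc
    push_neg at hc
    have hle : ‖x‖ ≤ max ‖x + e‖ ‖e‖ := by
      calc ‖x‖ = ‖(x + e) + (-e)‖ := by ring_nf
        _ ≤ max ‖x + e‖ ‖-e‖ := carrier_nonarch C _ _
        _ = max ‖x + e‖ ‖e‖ := by rw [norm_neg]
    have := hle.trans_lt (max_lt hc h)
    exact absurd this (lt_irrefl _)

end Carrier

section Identity
variable (p : ℕ) [hp : Fact p.Prime] {n : ℕ} (α : Fin n)

/-- The "tail" `w` with `(1+T_α)^p − 1 = T_α^p (1 + w)`. -/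
noncomputable def wTail : AddMonoidAlgebra ℚ_[p] (Fin n → ℤ) :=
  ∑ k ∈ Finset.range (p - 1),
    AddMonoidAlgebra.single ((((k : ℤ) + 1) - p) • Pi.single α (1 : ℤ))
      ((p.choose (k + 1) : ℚ_[p]))

lemma Tvar_pow (k : ℕ) :
    (Tvar p α) ^ k = AddMonoidAlgebra.single ((k : ℤ) • Pi.single α (1 : ℤ)) 1 := by
  rw [Tvar, AddMonoidAlgebra.single_pow, one_pow, natCast_zsmul]

noncomputable def Fterm (k : ℕ) : AddMonoidAlgebra ℚ_[p] (Fin n → ℤ) :=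
  AddMonoidAlgebra.single (((k : ℤ)) • Pi.single α (1 : ℤ)) ((p.choose k : ℚ_[p]))

lemma key_identity :
    (1 + Tvar p α) ^ p - 1 =
      AddMonoidAlgebra.single ((p : ℤ) • Pi.single α (1 : ℤ)) 1 * (1 + wTail p α) := by
  have hp1 : p - 1 + 1 = p := Nat.succ_pred_eq_of_pos hp.out.pos
  have hF : ∀ k, Fterm p α k =
      AddMonoidAlgebra.single (((k : ℤ)) • Pi.single α (1 : ℤ)) ((p.choose k : ℚ_[p])) :=
    fun k => rfl
  have expand : (1 + Tvar p α) ^ p = ∑ k ∈ Finset.range (p + 1), Fterm p α k := by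
    rw [add_comm (1 : AddMonoidAlgebra ℚ_[p] (Fin n → ℤ)) (Tvar p α), add_pow]
    apply Finset.sum_congr rfl
    intro k _
    rw [Tvar_pow, one_pow, mul_one, AddMonoidAlgebra.natCast_def,
      AddMonoidAlgebra.single_mul_single, add_zero, one_mul, hF k]
  have hF0 : Fterm p α 0 = 1 := by
    rw [hF 0, AddMonoidAlgebra.one_def]
    congr 1
    · norm_num
    · norm_num
  have hFp : Fterm p α p = AddMonoidAlgebra.single ((p : ℤ) • Pi.single α (1 : ℤ)) 1 := by
    simp [hF, Nat.choose_self]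
  have lhs : (1 + Tvar p α) ^ p - 1 =
      ∑ k ∈ Finset.range (p - 1), Fterm p α (k + 1)
      + AddMonoidAlgebra.single ((p : ℤ) • Pi.single α (1 : ℤ)) 1 := by
    rw [expand, Finset.sum_range_succ' (Fterm p α) p, hF0]
    have hgen : ∀ (M : Type) (_ : AddCommMonoid M) (G : ℕ → M),
        ∑ k ∈ Finset.range p, G k = ∑ k ∈ Finset.range (p - 1), G k + G (p - 1) := by
      intro M _ G
      conv_lhs => rw [← hp1]
      rw [Finset.sum_range_succ]
    have hsplit := hgen _ inferInstance fun k => Fterm p α (k + 1)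
    rw [hsplit, hp1, hFp]
    ring
  rw [lhs, wTail, mul_add, mul_one, Finset.mul_sum]
  rw [add_comm]
  congr 1
  apply Finset.sum_congr rfl
  intro k _
  rw [hF (k+1), AddMonoidAlgebra.single_mul_single, one_mul]
  congr 2
  · rw [← add_smul]
    congr 1
    push_cast
    ring

end Identity

section Carrier2
variable {p : ℕ} [hp : Fact p.Prime] {n : ℕ} {s r : Fin n → ℝ}
  (C : GaussCompletion p n (intervalGaussNorm p s r))

lemma carrier_inv_sub_one {δ : ℝ} (hδ1 : δ < 1) (V : C.carrierˣ)
    (hV : ‖(V : C.carrier) - 1‖ ≤ δ) :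
    ‖((V⁻¹ : C.carrierˣ) : C.carrier) - 1‖ ≤ δ := by
  have hδ0 : 0 ≤ δ := (norm_nonneg _).trans hV
  set x : C.carrier := ((V⁻¹ : C.carrierˣ) : C.carrier) with hx
  have hxv : (V : C.carrier) * x = 1 := Units.mul_inv V
  have hxeq : x - 1 = -(((V : C.carrier) - 1) * x) := by
    linear_combination hxv
  have hxle : ‖x‖ ≤ 1 := by
    by_contra hc
    push_neg at hc
    have h1 : x = 1 + -(((V : C.carrier) - 1) * x) := by linear_combination hxv
    have h2 : ‖x‖ ≤ max ‖(1 : C.carrier)‖ ‖((V : C.carrier) - 1) * x‖ := by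
      conv_lhs => rw [h1]
      refine (carrier_nonarch C _ _).trans ?_
      rw [norm_neg]
    have h3 : ‖((V : C.carrier) - 1) * x‖ ≤ δ * ‖x‖ :=
      (norm_mul_le _ _).trans (mul_le_mul_of_nonneg_right hV (norm_nonneg _))
    have h4 : δ * ‖x‖ < ‖x‖ := by nlinarith
    have h5 : ‖(1 : C.carrier)‖ < ‖x‖ := by rw [carrier_norm_one C]; exact hc
    exact absurd (h2.trans_lt (max_lt h5 (h3.trans_lt h4))) (lt_irrefl _)
  calc ‖x - 1‖ = ‖((V : C.carrier) - 1) * x‖ := by rw [hxeq, norm_neg]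
    _ ≤ δ * ‖x‖ := (norm_mul_le _ _).trans (mul_le_mul_of_nonneg_right hV (norm_nonneg _))
    _ ≤ δ * 1 := mul_le_mul_of_nonneg_left hxle hδ0
    _ = δ := mul_one δ

lemma carrier_zpow_sub_one {δ : ℝ} (hδ1 : δ < 1) (V : C.carrierˣ)
    (hV : ‖(V : C.carrier) - 1‖ ≤ δ) (k : ℤ) :
    ‖((V ^ k : C.carrierˣ) : C.carrier) - 1‖ ≤ δ := by
  rcases k with k | k
  · rw [Int.ofNat_eq_coe, zpow_natCast, Units.val_pow_eq_pow_val]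
    exact carrier_pow_sub_one C hδ1.le hV k
  · rw [zpow_negSucc, ← inv_pow, Units.val_pow_eq_pow_val]
    exact carrier_pow_sub_one C hδ1.le (carrier_inv_sub_one C hδ1 V hV) (k + 1)

end Carrier2

section WBound
variable {p : ℕ} [hp : Fact p.Prime] {n : ℕ} (α : Fin n) (s r : Fin n → ℝ)

/-- The contraction factor `δ = p^{r_α/p − 1} < 1`. -/
noncomputable def deltaW (p : ℕ) (α : Fin n) (r : Fin n → ℝ) : ℝ :=
  (p : ℝ) ^ (r α / p - 1 : ℝ)

lemma deltaW_nonneg : 0 ≤ deltaW p α r := (Real.rpow_pos_of_pos (p_pos p) _).le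

lemma deltaW_lt_one (hs : ∀ β, 0 < s β) (hsr : ∀ β, s β ≤ r β) (hrα : r α < 1) :
    deltaW p α r < 1 := by
  apply Real.rpow_lt_one_of_one_lt_of_neg (p_one_lt p)
  have h1 : r α / p < 1 := by
    rw [div_lt_one (p_pos p)]
    exact hrα.trans_le (by exact_mod_cast hp.out.one_lt.le)
  linarith

lemma gaussWeight_zsmul_single (t : Fin n → ℝ) (z : ℤ) :
    gaussWeight p t (z • Pi.single α (1 : ℤ)) = (p : ℝ) ^ (-(t α * z) / ((p : ℝ) - 1)) := by
  unfold gaussWeight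
  congr 2
  rw [Fintype.sum_eq_single α]
  · simp
  · intro β hβ
    simp [Pi.single_apply, hβ]

lemma iN_wTail_single_le (hs : ∀ β, 0 < s β) (hsr : ∀ β, s β ≤ r β) (hrα : r α < 1)
    (k : ℕ) (hk : k ∈ Finset.range (p - 1)) :
    intervalGaussNorm p (Function.update s α (s α / p)) (Function.update r α (r α / p))
      (AddMonoidAlgebra.single ((((k : ℤ) + 1) - p) • Pi.single α (1 : ℤ))
        ((p.choose (k + 1) : ℚ_[p]))) ≤ deltaW p α r := by
  have hklt : k + 1 < p := by
    have := Finset.mem_range.mp hk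
    omega
  have hp1R : (1 : ℝ) < p := p_one_lt p
  apply iN_le
  intro c
  rw [gaussNorm_single, corner_update, gaussWeight_zsmul_single]
  -- coefficient bound
  have hdvd : (p : ℤ) ^ 1 ∣ (p.choose (k + 1) : ℤ) := by
    rw [pow_one]
    exact_mod_cast hp.out.dvd_choose_self (Nat.succ_ne_zero k) hklt
  have hcoeff : ‖((p.choose (k + 1) : ℤ) : ℚ_[p])‖ ≤ (p : ℝ) ^ (-(1 : ℤ)) :=
    (Padic.norm_int_le_pow_iff_dvd _ 1).mpr hdvd
  have hcoeff' : ‖((p.choose (k + 1)) : ℚ_[p])‖ ≤ ((p : ℝ))⁻¹ := by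
    rw [zpow_neg, zpow_one] at hcoeff
    exact_mod_cast hcoeff
  -- weight bound
  set τ := corner s r c α with hτ
  have hτpos : 0 < τ := by
    rw [hτ]; unfold corner
    split
    · exact (hs α).trans_le (hsr α)
    · exact hs α
  have hτle : τ ≤ r α := by
    rw [hτ]; unfold corner
    split
    · exact le_rfl
    · exact hsr α
  have hupdate : Function.update (corner s r c) α (corner s r c α / p) α = τ / p := by
    rw [Function.update_self]
  rw [hupdate]
  have hp0 : (0 : ℝ) < p := p_pos p
  have hexp : -(τ / p * (((k : ℝ) + 1) - p)) / ((p : ℝ) - 1) ≤ r α / p := by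
    have hpm1 : (0 : ℝ) < (p : ℝ) - 1 := by linarith
    have hnum : -(τ / p * (((k : ℝ) + 1) - p)) / ((p : ℝ) - 1)
        = τ / p * (((p : ℝ) - 1 - k) / ((p : ℝ) - 1)) := by
      field_simp
      ring
    rw [hnum]
    have hk0 : (0 : ℝ) ≤ k := Nat.cast_nonneg k
    have hfrac : ((p : ℝ) - 1 - k) / ((p : ℝ) - 1) ≤ 1 := by
      rw [div_le_one hpm1]; linarith
    have hτp : 0 ≤ τ / p := (div_pos hτpos hp0).le
    calc τ / p * (((p : ℝ) - 1 - k) / ((p : ℝ) - 1))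
        ≤ τ / p * 1 := mul_le_mul_of_nonneg_left hfrac hτp
      _ = τ / p := mul_one _
      _ ≤ r α / p := (div_le_div_iff_of_pos_right hp0).mpr hτle
  have hcast : ((((k : ℤ) + 1) - (p : ℤ) : ℤ) : ℝ) = ((k : ℝ) + 1) - p := by push_cast; ring
  have hweight : (p : ℝ) ^ (-(τ / p * ((((k : ℤ) + 1) - (p : ℤ) : ℤ) : ℝ)) / ((p : ℝ) - 1))
      ≤ (p : ℝ) ^ (r α / p : ℝ) := by
    rw [hcast]
    exact (Real.rpow_le_rpow_left_iff hp1R).mpr hexp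
  have hfin : ((p : ℝ))⁻¹ * (p : ℝ) ^ (r α / p : ℝ) = deltaW p α r := by
    unfold deltaW
    rw [Real.rpow_sub hp0, Real.rpow_one]
    ring
  calc ‖((p.choose (k + 1)) : ℚ_[p])‖ *
        (p : ℝ) ^ (-(τ / p * ((((k : ℤ) + 1) - (p : ℤ) : ℤ) : ℝ)) / ((p : ℝ) - 1))
      ≤ ((p : ℝ))⁻¹ * (p : ℝ) ^ (r α / p : ℝ) :=
        mul_le_mul hcoeff' hweight (Real.rpow_pos_of_pos hp0 _).le (by positivity)
    _ = deltaW p α r := hfin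

end WBound

section Phi
variable {p : ℕ} [hp : Fact p.Prime] {n : ℕ} (α : Fin n)

lemma gaussNorm_zero (t : Fin n → ℝ) :
    gaussNorm p t (0 : AddMonoidAlgebra ℚ_[p] (Fin n → ℤ)) = 0 := by
  unfold gaussNorm
  simp [ciSup_const]

lemma iN_zero (s r : Fin n → ℝ) :
    intervalGaussNorm p s r (0 : AddMonoidAlgebra ℚ_[p] (Fin n → ℤ)) = 0 := by
  unfold intervalGaussNorm
  simp [gaussNorm_zero, ciSup_const]

lemma iN_single_le_self (s r : Fin n → ℝ) (f : AddMonoidAlgebra ℚ_[p] (Fin n → ℤ))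
    (m : Fin n → ℤ) :
    intervalGaussNorm p s r (AddMonoidAlgebra.single m (f.coeff m)) ≤ intervalGaussNorm p s r f := by
  apply iN_le
  intro c
  rw [gaussNorm_single]
  exact (le_gaussNorm _ f m).trans (gauss_le_iN s r f c)

variable {N : AddMonoidAlgebra ℚ_[p] (Fin n → ℤ) → ℝ} (CS : GaussCompletion p n N)
  (V : CS.carrierˣ)

/-- The monoid homomorphism `m ↦ T^{σ(m)} V^{m_α}` underlying `φ_α`. -/
noncomputable def GHom : Multiplicative (Fin n → ℤ) →* CS.carrier where
  toFun m := CS.emb (AddMonoidAlgebra.single (sigmaSub p α (Multiplicative.toAdd m)) 1) *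
    ((V ^ ((Multiplicative.toAdd m) α) : CS.carrierˣ) : CS.carrier)
  map_one' := by
    show CS.emb (AddMonoidAlgebra.single (sigmaSub p α 0) 1) *
      ((V ^ ((0 : Fin n → ℤ) α) : CS.carrierˣ) : CS.carrier) = 1
    rw [sigmaSub_zero, ← AddMonoidAlgebra.one_def, map_one]
    simp
  map_mul' := by
    intro x y
    show CS.emb (AddMonoidAlgebra.single (sigmaSub p α (Multiplicative.toAdd x + Multiplicative.toAdd y)) 1) *
        ((V ^ ((Multiplicative.toAdd x + Multiplicative.toAdd y) α) : CS.carrierˣ) : CS.carrier) = _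
    rw [sigmaSub_add]
    have h1 : (AddMonoidAlgebra.single (sigmaSub p α (Multiplicative.toAdd x) +
        sigmaSub p α (Multiplicative.toAdd y)) (1 : ℚ_[p])) =
        AddMonoidAlgebra.single (sigmaSub p α (Multiplicative.toAdd x)) 1 *
        AddMonoidAlgebra.single (sigmaSub p α (Multiplicative.toAdd y)) 1 := by
      rw [AddMonoidAlgebra.single_mul_single, one_mul]
    rw [h1, map_mul]
    have h2 : V ^ ((Multiplicative.toAdd x + Multiplicative.toAdd y) α) =
        V ^ ((Multiplicative.toAdd x) α) * V ^ ((Multiplicative.toAdd y) α) := by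
      rw [Pi.add_apply, zpow_add]
    rw [h2, Units.val_mul]
    exact mul_mul_mul_comm _ _ _ _

/-- The partial Frobenius on the Laurent polynomial ring, valued in the completion. -/
noncomputable def phi0 : AddMonoidAlgebra ℚ_[p] (Fin n → ℤ) →ₐ[ℚ_[p]] CS.carrier :=
  AddMonoidAlgebra.lift ℚ_[p] CS.carrier (Fin n → ℤ) (GHom α CS V)

lemma phi0_single (m : Fin n → ℤ) (a : ℚ_[p]) :
    phi0 α CS V (AddMonoidAlgebra.single m a) =
      a • (CS.emb (AddMonoidAlgebra.single (sigmaSub p α m) 1) *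
        ((V ^ (m α) : CS.carrierˣ) : CS.carrier)) := by
  unfold phi0
  rw [AddMonoidAlgebra.lift_single]
  rfl

end Phi

section Iso
variable {p : ℕ} [hp : Fact p.Prime] {n : ℕ} (α : Fin n) (s r : Fin n → ℝ)
  (Cstar : GaussCompletion p n (intervalGaussNorm p (Function.update s α (s α / p))
    (Function.update r α (r α / p))))
  (V : Cstar.carrierˣ)

lemma phi0_isometry (hδ1 : deltaW p α r < 1)
    (hV : ‖(V : Cstar.carrier) - 1‖ ≤ deltaW p α r)
    (f : AddMonoidAlgebra ℚ_[p] (Fin n → ℤ)) :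
    ‖phi0 α Cstar V f‖ = intervalGaussNorm p s r f := by
  set δ := deltaW p α r with hδ
  have hδ0 : 0 ≤ δ := deltaW_nonneg α r
  have hz : ∀ k : ℤ, ‖((V ^ k : Cstar.carrierˣ) : Cstar.carrier) - 1‖ ≤ δ :=
    carrier_zpow_sub_one Cstar hδ1 V hV
  set X := Cstar.emb (AddMonoidAlgebra.mapDomain (sigmaSub p α) f) with hXdef
  have hX : ‖X‖ = intervalGaussNorm p s r f := by
    rw [hXdef, Cstar.isometric, iN_mapDomain]
  set E := ∑ m ∈ f.coeff.support, (f.coeff m) • (Cstar.emb (AddMonoidAlgebra.single (sigmaSub p α m) 1) *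
    (((V ^ (m α) : Cstar.carrierˣ) : Cstar.carrier) - 1)) with hEdef
  have hsingle_eq : ∀ (m : Fin n → ℤ) (a : ℚ_[p]),
      (AddMonoidAlgebra.ofCoeff (Finsupp.single m a) : AddMonoidAlgebra ℚ_[p] (Fin n → ℤ)) =
        AddMonoidAlgebra.single m a := fun _ _ => rfl
  have hsingle_smul : ∀ (m : Fin n → ℤ) (a : ℚ_[p]),
      (AddMonoidAlgebra.single m a : AddMonoidAlgebra ℚ_[p] (Fin n → ℤ)) =
        a • AddMonoidAlgebra.single m 1 := by
    intro m a
    rw [AddMonoidAlgebra.smul_single', mul_one]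
  have hphi : phi0 α Cstar V f =
      ∑ m ∈ f.coeff.support, (f.coeff m) • (Cstar.emb (AddMonoidAlgebra.single (sigmaSub p α m) 1) *
        ((V ^ (m α) : Cstar.carrierˣ) : Cstar.carrier)) := by
    conv_lhs => rw [← AddMonoidAlgebra.sum_coeff_single f]
    rw [Finsupp.sum, map_sum]
    apply Finset.sum_congr rfl
    intro m _
    rw [phi0_single]
  have hXsum : X = ∑ m ∈ f.coeff.support,
      (f.coeff m) • Cstar.emb (AddMonoidAlgebra.single (sigmaSub p α m) 1) := by
    rw [hXdef, AddMonoidAlgebra.mapDomain, Finsupp.mapDomain, Finsupp.sum, AddMonoidAlgebra.ofCoeff_sum, map_sum]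
    apply Finset.sum_congr rfl
    intro m _
    rw [hsingle_eq, hsingle_smul (sigmaSub p α m) (f.coeff m), map_smul]
  have hsplit : phi0 α Cstar V f = X + E := by
    rw [hphi, hXsum, hEdef, ← Finset.sum_add_distrib]
    apply Finset.sum_congr rfl
    intro m _
    rw [← smul_add]
    congr 1
    ring
  have hE : ‖E‖ ≤ δ * intervalGaussNorm p s r f := by
    rw [hEdef]
    apply carrier_nonarch_sum Cstar _ _ (mul_nonneg hδ0 (iN_nonneg s r f))
    intro m _
    rw [← smul_mul_assoc]
    have h1 : (f.coeff m) • Cstar.emb (AddMonoidAlgebra.single (sigmaSub p α m) 1) =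
        Cstar.emb (AddMonoidAlgebra.single (sigmaSub p α m) (f.coeff m)) := by
      rw [hsingle_smul (sigmaSub p α m) (f.coeff m), map_smul]
    rw [h1]
    have h2 : ‖Cstar.emb (AddMonoidAlgebra.single (sigmaSub p α m) (f.coeff m))‖ ≤
        intervalGaussNorm p s r f := by
      rw [Cstar.isometric, ← AddMonoidAlgebra.mapDomain_single (f := sigmaSub p α),
        iN_mapDomain]
      exact iN_single_le_self s r f m
    calc ‖Cstar.emb (AddMonoidAlgebra.single (sigmaSub p α m) (f.coeff m)) *
          (((V ^ (m α) : Cstar.carrierˣ) : Cstar.carrier) - 1)‖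
        ≤ ‖Cstar.emb (AddMonoidAlgebra.single (sigmaSub p α m) (f.coeff m))‖ *
          ‖((V ^ (m α) : Cstar.carrierˣ) : Cstar.carrier) - 1‖ := norm_mul_le _ _
      _ ≤ intervalGaussNorm p s r f * δ :=
          mul_le_mul h2 (hz (m α)) (norm_nonneg _) (iN_nonneg s r f)
      _ = δ * intervalGaussNorm p s r f := mul_comm _ _
  rcases eq_or_lt_of_le (iN_nonneg s r f) with h0 | h0
  · have hf0 : f = 0 := iN_eq_zero h0.symm
    subst hf0
    rw [map_zero, norm_zero, iN_zero]
  · have hlt : ‖E‖ < ‖X‖ := by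
      rw [hX]
      refine hE.trans_lt ?_
      nlinarith
    rw [hsplit, carrier_eq_norm_add_of_lt Cstar hlt, hX]

end Iso

section PhiVals
variable {p : ℕ} [hp : Fact p.Prime] {n : ℕ} (α : Fin n)
  {N : AddMonoidAlgebra ℚ_[p] (Fin n → ℤ) → ℝ} (CS : GaussCompletion p n N)
  (V : CS.carrierˣ)

lemma sigmaSub_single_self :
    sigmaSub p α (Pi.single α (1 : ℤ)) = (p : ℤ) • Pi.single α (1 : ℤ) := by
  funext β
  rw [sigmaSub_apply]
  rcases eq_or_ne β α with rfl | hne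
  · simp
  · simp [hne, Pi.single_eq_of_ne hne]

lemma sigmaSub_single_ne {β : Fin n} (hβ : β ≠ α) :
    sigmaSub p α (Pi.single β (1 : ℤ)) = Pi.single β (1 : ℤ) := by
  funext γ
  rw [sigmaSub_apply]
  rcases eq_or_ne γ α with rfl | hne
  · rw [if_pos rfl, Pi.single_eq_of_ne (Ne.symm hβ), mul_zero]
  · rw [if_neg hne]

lemma phi0_Tvar_self (hVval : (V : CS.carrier) = 1 + CS.emb (wTail p α)) :
    phi0 α CS V (Tvar p α) = CS.emb ((1 + Tvar p α) ^ p - 1) := by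
  rw [key_identity, map_mul, map_add, map_one]
  conv_lhs => rw [Tvar]
  rw [phi0_single, one_smul, sigmaSub_single_self, Pi.single_eq_same, zpow_one, hVval]

lemma phi0_Tvar_ne {β : Fin n} (hβ : β ≠ α) :
    phi0 α CS V (Tvar p β) = CS.emb (Tvar p β) := by
  conv_lhs => rw [Tvar]
  rw [phi0_single, one_smul, sigmaSub_single_ne α hβ,
    Pi.single_eq_of_ne (Ne.symm hβ), zpow_zero, Units.val_one, mul_one, Tvar]

end PhiVals

section VDef
variable {p : ℕ} [hp : Fact p.Prime] {n : ℕ} (α : Fin n) (s r : Fin n → ℝ)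
  (Cstar : GaussCompletion p n (intervalGaussNorm p (Function.update s α (s α / p))
    (Function.update r α (r α / p))))

lemma wbar_le (hs : ∀ β, 0 < s β) (hsr : ∀ β, s β ≤ r β) (hrα : r α < 1) :
    ‖Cstar.emb (wTail p α)‖ ≤ deltaW p α r := by
  rw [wTail, map_sum]
  apply carrier_nonarch_sum Cstar _ _ (deltaW_nonneg α r)
  intro k hk
  rw [Cstar.isometric]
  exact iN_wTail_single_le α s r hs hsr hrα k hk

end VDef

section MHomExt
variable {n : ℕ} {M : Type} [CommMonoid M]

lemma pi_single_zsmul (β : Fin n) (y : ℤ) :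
    Pi.single β y = (y • Pi.single β (1 : ℤ) : Fin n → ℤ) := by
  funext γ
  rcases eq_or_ne γ β with rfl | hne
  · rw [Pi.single_eq_same, Pi.smul_apply, Pi.single_eq_same, smul_eq_mul, mul_one]
  · rw [Pi.single_eq_of_ne hne, Pi.smul_apply, Pi.single_eq_of_ne hne, smul_eq_mul, mul_zero]

/-- The unit-valued additive version of a monoid hom out of `Multiplicative ℤⁿ`. -/
def unitsHom (g : Multiplicative (Fin n → ℤ) →* M) : (Fin n → ℤ) →+ Additive Mˣ where
  toFun m := Additive.ofMul (α := Mˣ)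
    ⟨g (Multiplicative.ofAdd m), g (Multiplicative.ofAdd (-m)),
      by rw [← map_mul, ← ofAdd_add, add_neg_cancel, ofAdd_zero, map_one],
      by rw [← map_mul, ← ofAdd_add, neg_add_cancel, ofAdd_zero, map_one]⟩
  map_zero' := by
    refine congrArg Additive.ofMul (Units.ext ?_)
    show g (Multiplicative.ofAdd 0) = 1
    rw [ofAdd_zero, map_one]
  map_add' a b := by
    refine congrArg Additive.ofMul (Units.ext ?_)
    show g (Multiplicative.ofAdd (a + b)) =
      g (Multiplicative.ofAdd a) * g (Multiplicative.ofAdd b)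
    rw [← map_mul, ← ofAdd_add]

lemma unitsHom_val (g : Multiplicative (Fin n → ℤ) →* M) (m : Fin n → ℤ) :
    ((Additive.toMul (unitsHom g m) : Mˣ) : M) = g (Multiplicative.ofAdd m) := rfl

lemma mhom_ext (g1 g2 : Multiplicative (Fin n → ℤ) →* M)
    (h : ∀ β : Fin n, g1 (Multiplicative.ofAdd (Pi.single β (1 : ℤ))) =
      g2 (Multiplicative.ofAdd (Pi.single β (1 : ℤ)))) : g1 = g2 := by
  have hU : unitsHom g1 = unitsHom g2 := by
    apply AddMonoidHom.functions_ext
    intro β y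
    rw [pi_single_zsmul β y, map_zsmul, map_zsmul]
    congr 1
    refine congrArg Additive.ofMul (Units.ext ?_)
    show g1 (Multiplicative.ofAdd (Pi.single β (1 : ℤ))) = _
    exact h β
  refine MonoidHom.ext fun x => ?_
  have := DFunLike.congr_fun hU (Multiplicative.toAdd x)
  have h2 := congrArg (fun u : Additive Mˣ => ((Additive.toMul u : Mˣ) : M)) this
  exact h2

end MHomExt


/-- For `0 < s ≤ r` with `r_α < 1`, there is a unique continuous `ℚ_p`-algebra homomorphism
`φ_α : Π_{[s,r]} → Π_{[s*,r*]}` (where `s*`, `r*` replace the `α`-th entries by `s_α/p`,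
`r_α/p`) with `φ_α(T_α) = (1+T_α)^p − 1` and `φ_α(T_β) = T_β` for `β ≠ α`; and `φ_α` is
isometric: `‖φ_α(F)‖_{[s*,r*]} = ‖F‖_{[s,r]}` for all `F`. -/
theorem partial_frobenius_on_laurent_completion
    (p : ℕ) [Fact p.Prime] (n : ℕ) (α : Fin n) (s r : Fin n → ℝ)
    (hs : ∀ β, 0 < s β) (hsr : ∀ β, s β ≤ r β) (hrα : r α < 1)
    (C : GaussCompletion p n (intervalGaussNorm p s r))
    (Cstar : GaussCompletion p n
      (intervalGaussNorm p (Function.update s α (s α / p)) (Function.update r α (r α / p)))) :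
    (∃! Φ : C.carrier →ₐ[ℚ_[p]] Cstar.carrier, Continuous Φ ∧
      Φ (C.emb (Tvar p α)) = Cstar.emb ((1 + Tvar p α) ^ p - 1) ∧
      ∀ β, β ≠ α → Φ (C.emb (Tvar p β)) = Cstar.emb (Tvar p β)) ∧
    (∀ Φ : C.carrier →ₐ[ℚ_[p]] Cstar.carrier, Continuous Φ →
      Φ (C.emb (Tvar p α)) = Cstar.emb ((1 + Tvar p α) ^ p - 1) →
      (∀ β, β ≠ α → Φ (C.emb (Tvar p β)) = Cstar.emb (Tvar p β)) →
      ∀ F, ‖Φ F‖ = ‖F‖) := by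
  have hδ1 : deltaW p α r < 1 := deltaW_lt_one α s r hs hsr hrα
  have hwb : ‖Cstar.emb (wTail p α)‖ ≤ deltaW p α r := wbar_le α s r Cstar hs hsr hrα
  have hwlt : ‖-Cstar.emb (wTail p α)‖ < 1 := by rw [norm_neg]; exact hwb.trans_lt hδ1
  set V : Cstar.carrierˣ := Units.oneSub _ hwlt with hVdef
  have hVval : (V : Cstar.carrier) = 1 + Cstar.emb (wTail p α) := by
    rw [hVdef, Units.val_oneSub, sub_neg_eq_add]
  have hV : ‖(V : Cstar.carrier) - 1‖ ≤ deltaW p α r := by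
    rw [hVval, add_sub_cancel_left]; exact hwb
  have hiso := phi0_isometry α s r Cstar V hδ1 hV
  have hinj : Function.Injective ⇑C.emb := by
    intro f g hfg
    have h0 : ‖C.emb (f - g)‖ = 0 := by rw [map_sub, hfg, sub_self, norm_zero]
    rw [C.isometric] at h0
    exact sub_eq_zero.mp (iN_eq_zero h0)
  letI : MetricSpace (AddMonoidAlgebra ℚ_[p] (Fin n → ℤ)) :=
    MetricSpace.induced ⇑C.emb hinj inferInstance
  have hisoEmb : Isometry ⇑C.emb := Isometry.of_dist_eq fun _ _ => rfl
  have ui : IsUniformInducing ⇑C.emb := hisoEmb.isUniformInducing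
  have dr : DenseRange ⇑C.emb := C.denseRange
  have hphiIso : Isometry ⇑(phi0 α Cstar V) := Isometry.of_dist_eq (by
    intro f g
    have hd : dist f g = ‖C.emb f - C.emb g‖ := by
      show dist (C.emb f) (C.emb g) = _
      rw [dist_eq_norm]
    rw [dist_eq_norm, hd, ← map_sub, ← map_sub, hiso, C.isometric])
  have huc : UniformContinuous ⇑(phi0 α Cstar V) := hphiIso.uniformContinuous
  have ui' : IsUniformInducing ⇑(C.emb.toRingHom) := ui
  have dr' : DenseRange ⇑(C.emb.toRingHom) := dr
  have huc' : UniformContinuous ⇑((phi0 α Cstar V).toRingHom) := huc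
  let Φr : C.carrier →+* Cstar.carrier := IsDenseInducing.extendRingHom ui' dr' huc'
  have hΦre : ∀ f, Φr (C.emb f) = phi0 α Cstar V f := fun f =>
    IsDenseInducing.extend_eq (ui'.isDenseInducing dr') huc'.continuous f
  have hΦc : Continuous ⇑Φr := (uniformContinuous_uniformly_extend ui' dr' huc').continuous
  let ΦA : C.carrier →ₐ[ℚ_[p]] Cstar.carrier :=
    { toRingHom := Φr,
      commutes' := fun a => by
        have h1 : algebraMap ℚ_[p] C.carrier a =
            C.emb (algebraMap ℚ_[p] (AddMonoidAlgebra ℚ_[p] (Fin n → ℤ)) a) :=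
          (C.emb.commutes a).symm
        show Φr (algebraMap ℚ_[p] C.carrier a) = algebraMap ℚ_[p] Cstar.carrier a
        rw [h1, hΦre, AlgHom.commutes] }
  have hΦAc : Continuous ⇑ΦA := hΦc
  have hΦAe : ∀ f, ΦA (C.emb f) = phi0 α Cstar V f := hΦre
  have hTa : ΦA (C.emb (Tvar p α)) = Cstar.emb ((1 + Tvar p α) ^ p - 1) := by
    rw [hΦAe, phi0_Tvar_self α Cstar V hVval]
  have hTb : ∀ β, β ≠ α → ΦA (C.emb (Tvar p β)) = Cstar.emb (Tvar p β) := fun β hβ => by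
    rw [hΦAe, phi0_Tvar_ne α Cstar V hβ]
  have hnorm : ∀ x, ‖ΦA x‖ = ‖x‖ := by
    intro x
    refine DenseRange.induction_on dr x ?_ ?_
    · exact isClosed_eq (continuous_norm.comp hΦAc) continuous_norm
    · intro f
      show ‖ΦA (C.emb f)‖ = ‖C.emb f‖
      rw [hΦAe, hiso, C.isometric]
  have huniq : ∀ Φ' : C.carrier →ₐ[ℚ_[p]] Cstar.carrier, Continuous Φ' →
      Φ' (C.emb (Tvar p α)) = Cstar.emb ((1 + Tvar p α) ^ p - 1) →
      (∀ β, β ≠ α → Φ' (C.emb (Tvar p β)) = Cstar.emb (Tvar p β)) → Φ' = ΦA := by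
    intro Φ' hc h1 h2
    have hgen : ∀ β : Fin n,
        (Φ'.comp C.emb) (AddMonoidAlgebra.single (Pi.single β (1 : ℤ)) (1 : ℚ_[p])) =
        (ΦA.comp C.emb) (AddMonoidAlgebra.single (Pi.single β (1 : ℤ)) (1 : ℚ_[p])) := by
      intro β
      rcases eq_or_ne β α with rfl | hβ
      · show Φ' (C.emb (Tvar p β)) = ΦA (C.emb (Tvar p β))
        rw [h1, hTa]
      · show Φ' (C.emb (Tvar p β)) = ΦA (C.emb (Tvar p β))
        rw [h2 β hβ, hTb β hβ]
    have hcomp : Φ'.comp C.emb = ΦA.comp C.emb := by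
      set E := AddMonoidAlgebra.lift ℚ_[p] Cstar.carrier (Fin n → ℤ) with hE
      have hg : E.symm (Φ'.comp C.emb) = E.symm (ΦA.comp C.emb) := by
        apply mhom_ext
        intro β
        rw [hE, AddMonoidAlgebra.lift_symm_apply, AddMonoidAlgebra.lift_symm_apply]
        exact hgen β
      calc Φ'.comp C.emb = E (E.symm (Φ'.comp C.emb)) := (E.apply_symm_apply _).symm
        _ = E (E.symm (ΦA.comp C.emb)) := by rw [hg]
        _ = ΦA.comp C.emb := E.apply_symm_apply _
    apply DFunLike.ext
    intro x
    refine DenseRange.induction_on dr x ?_ ?_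
    · exact isClosed_eq hc hΦAc
    · intro f
      exact DFunLike.congr_fun hcomp f
  constructor
  · exact ⟨ΦA, ⟨hΦAc, hTa, hTb⟩, fun Φ' h' => huniq Φ' h'.1 h'.2.1 h'.2.2⟩
  · intro Φ' hc h1 h2 F
    rw [huniq Φ' hc h1 h2]
    exact hnorm F
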